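/- Let F : C → D be a triangulated functor between triangulated categories with D nonzero, such that: (i) F admits a left adjoint F' with the adjunction unit id → F ∘ F' an isomorphism; (ii) C is indecomposable as a triangulated category; (iii) C admits a Serre functor isomorphic to a shift functor. Then F is an equivalence of categories. -/

import Mathlib

open CategoryTheory Limits

/-- Let `F : C → D` be a triangulated functor between triangulated
categories with `D` nonzero, such that (i) `F` admits a left adjoint `F'` with the
adjunction unit `id → F ∘ F'` an isomorphism; (ii) `C` is indecomposable as a
triangulated category (any decomposition of `C` into two mutually orthogonal
shift-stable classes through which every object factors as a biproduct has one side
consisting of zero objects); (iii) `C` admits a Serre functor isomorphic to a shift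
functor (`C` is Calabi–Yau). Then `F` is an equivalence. -/
theorem triangulated_functor_equivalence_of_calabiYau
    {k : Type*} [Field k]
    {C D : Type*} [Category C] [Category D]
    [HasZeroObject C] [HasZeroObject D] [Preadditive C] [Preadditive D]
    [Linear k C] [HasShift C ℤ] [HasShift D ℤ]
    [∀ n : ℤ, (shiftFunctor C n).Additive] [∀ n : ℤ, (shiftFunctor D n).Additive]
    [Pretriangulated C] [Pretriangulated D] [HasBinaryBiproducts C]
    [∀ X Y : C, FiniteDimensional k (X ⟶ Y)]
    (F : C ⥤ D) [F.CommShift ℤ] [F.IsTriangulated]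
    (F' : D ⥤ C) (adj : F' ⊣ F)
    -- (i) the adjunction unit `id → F ∘ F'` is an isomorphism
    (hunit : IsIso adj.unit)
    -- `D` is nonzero
    (hD : ∃ X : D, ¬ IsZero X)
    -- (ii) `C` is indecomposable as a triangulated category
    (hindec : ∀ P Q : Set C,
      (∀ X ∈ P, ∀ n : ℤ, X⟦n⟧ ∈ P) → (∀ X ∈ Q, ∀ n : ℤ, X⟦n⟧ ∈ Q) →
      (∀ p ∈ P, ∀ q ∈ Q, (∀ f : p ⟶ q, f = 0) ∧ (∀ f : q ⟶ p, f = 0)) →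
      (∀ X : C, ∃ p ∈ P, ∃ q ∈ Q, Nonempty (X ≅ p ⊞ q)) →
      (∀ p ∈ P, IsZero p) ∨ (∀ q ∈ Q, IsZero q))
    -- (iii) `C` is Calabi–Yau: the Serre functor is the shift by `n`
    (n : ℤ)
    (serre : ∀ X Y : C, (X ⟶ Y) ≃ₗ[k] Module.Dual k (Y ⟶ X⟦n⟧)) :
    F.IsEquivalence := by
  haveI := hunit
  -- the class of objects killed by `F`
  let Q : Set C := {X | IsZero (F.obj X)}
  -- the both-sided orthogonal of `Q`
  let P : Set C := {X | ∀ q ∈ Q, (∀ f : X ⟶ q, f = 0) ∧ (∀ f : q ⟶ X, f = 0)}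
  -- `Q` is stable under shifts
  have hQshift : ∀ X ∈ Q, ∀ m : ℤ, X⟦m⟧ ∈ Q := by
    intro X hX m
    exact ((shiftFunctor D m).map_isZero (show IsZero (F.obj X) from hX)).of_iso ((F.commShiftIso m).app X)
  -- `P` is stable under shifts
  have hPshift : ∀ X ∈ P, ∀ m : ℤ, X⟦m⟧ ∈ P := by
    intro X hX m q hq
    constructor
    · intro f
      have adjE : shiftFunctor C m ⊣ shiftFunctor C (-m) := (shiftEquiv C m).toAdjunction
      apply (adjE.homEquiv X q).injective
      have h1 : adjE.homEquiv X q f = 0 := by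
        rw [Adjunction.homEquiv_unit]
        have := (hX _ (hQshift q hq (-m))).1 (adjE.unit.app X ≫ (shiftFunctor C (-m)).map f)
        exact this
      rw [h1, Adjunction.homEquiv_unit, Functor.map_zero, comp_zero]
    · intro f
      have adjE : shiftFunctor C (-m) ⊣ shiftFunctor C m := (shiftEquiv' C (-m) m (by omega)).toAdjunction
      have h1 : (adjE.homEquiv q X).symm f = 0 := by
        have := (hX _ (hQshift q hq (-m))).2 ((adjE.homEquiv q X).symm f)
        exact this
      have h2 : f = adjE.homEquiv q X ((adjE.homEquiv q X).symm f) := by simp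
      rw [h2, h1, Adjunction.homEquiv_unit, Functor.map_zero, comp_zero]
  -- morphisms from the image of `F'` to objects of `Q` vanish
  have lemA : ∀ (d : D) (q : C), q ∈ Q → ∀ f : F'.obj d ⟶ q, f = 0 := by
    intro d q hq f
    apply (adj.homEquiv d q).injective
    rw [Adjunction.homEquiv_unit, Adjunction.homEquiv_unit]
    have h1 : F.map f = 0 := hq.eq_of_tgt _ _
    rw [h1, Functor.map_zero]
  -- morphisms from objects of `Q` to the image of `F'` vanish, by Serre duality
  have lemB : ∀ (d : D) (q : C), q ∈ Q → ∀ f : q ⟶ F'.obj d, f = 0 := by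
    intro d q hq f
    rw [← (serre q (F'.obj d)).map_eq_zero_iff]
    apply LinearMap.ext
    intro g
    have hg : g = 0 := lemA d (q⟦n⟧) (hQshift q hq n) g
    rw [hg]
    simp
  -- objects in the image of `F'` belong to `P`
  have hP_F' : ∀ d : D, F'.obj d ∈ P := fun d q hq => ⟨lemA d q hq, lemB d q hq⟩
  -- for every `X`, the cone of the counit is killed by `F`
  have hFcone : ∀ (X Y : C) (g : X ⟶ Y) (h : Y ⟶ (F'.obj (F.obj X))⟦(1 : ℤ)⟧),
      (Pretriangulated.Triangle.mk (adj.counit.app X) g h ∈ distTriang C) → Y ∈ Q := by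
    intro X Y g h mem
    have memD := F.map_distinguished _ mem
    have hiso : IsIso (F.map (adj.counit.app X)) := by
      have h1 : IsIso (adj.unit.app (F.obj X) ≫ F.map (adj.counit.app X)) := by
        rw [adj.right_triangle_components]
        exact IsIso.id _
      exact IsIso.of_isIso_comp_left (adj.unit.app (F.obj X)) (F.map (adj.counit.app X))
    have : IsIso (F.mapTriangle.obj (Pretriangulated.Triangle.mk (adj.counit.app X) g h)).mor₁ := by
      dsimp [Functor.mapTriangle]
      exact hiso
    exact Pretriangulated.Triangle.isZero₃_of_isIso₁ _ memD this
  -- every object decomposes as a biproduct of an object of `P` and an object of `Q`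
  have hdecomp : ∀ X : C, ∃ p ∈ P, ∃ q ∈ Q, Nonempty (X ≅ p ⊞ q) := by
    intro X
    obtain ⟨Y, g, h, mem⟩ := Pretriangulated.distinguished_cocone_triangle (adj.counit.app X)
    have hYQ : Y ∈ Q := hFcone X Y g h mem
    have h0 : h = 0 :=
      (hPshift _ (hP_F' (F.obj X)) 1 Y hYQ).2 h
    obtain ⟨e, -, -⟩ := Pretriangulated.exists_iso_binaryBiproduct_of_distTriang _ mem h0
    exact ⟨F'.obj (F.obj X), hP_F' _, Y, hYQ, ⟨e⟩⟩
  -- apply indecomposability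
  rcases hindec P Q hPshift hQshift (fun p hp q hq => hp q hq) hdecomp with hPzero | hQzero
  · -- impossible: `D` would be zero
    exfalso
    obtain ⟨X, hX⟩ := hD
    apply hX
    have h1 : IsZero (F'.obj X) := hPzero _ (hP_F' X)
    have h2 : IsZero (F.obj (F'.obj X)) := F.map_isZero h1
    exact h2.of_iso (asIso (adj.unit.app X))
  · -- the counit is an isomorphism, hence `F` is an equivalence
    have hcounit : ∀ X : C, IsIso (adj.counit.app X) := by
      intro X
      obtain ⟨Y, g, h, mem⟩ := Pretriangulated.distinguished_cocone_triangle (adj.counit.app X)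
      have hY : IsZero Y := hQzero Y (hFcone X Y g h mem)
      exact (Pretriangulated.Triangle.isZero₃_iff_isIso₁ _ mem).1 hY
    haveI : ∀ X : D, IsIso (adj.unit.app X) := fun X => inferInstance
    exact adj.toEquivalence.isEquivalence_inverse
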